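/- Let (X,τ_X,d_X) and (Y,τ_Y,d_Y) be extended metric-topological spaces and let φ : (X,τ_X,d_X) → (Y,τ_Y,d_Y) be a continuous-short map. Then the following are equivalent: (a) for every extended metric-topological space (Z,τ_Z,d_Z) and all continuous-short maps ψ₁,ψ₂ : (Y,τ_Y,d_Y) → (Z,τ_Z,d_Z), ψ₁ ∘ φ = ψ₂ ∘ φ implies ψ₁ = ψ₂ (i.e. φ is an epimorphism); (b) the image φ(X) is dense in (Y,τ_Y). -/

import Mathlib

open scoped ENNReal

universe u v w

/-- An extended pseudodistance on `X`. -/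
structure IsExtPseudoDist {X : Type*} (d : X → X → ℝ≥0∞) : Prop where
  refl : ∀ x, d x x = 0
  symm : ∀ x y, d x y = d y x
  triangle : ∀ x y z, d x y ≤ d x z + d z y

/-- An extended distance on `X`. -/
structure IsExtDist {X : Type*} (d : X → X → ℝ≥0∞) : Prop where
  eq_zero_iff : ∀ x y, d x y = 0 ↔ x = y
  symm : ∀ x y, d x y = d y x
  triangle : ∀ x y z, d x y ≤ d x z + d z y

/-- `LIP_{b,1}(X,τ,d)`: bounded `τ`-continuous functions `f : X → ℝ` with
`|f x - f y| ≤ d x y`. -/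
def Lip1 {X : Type*} (τ : TopologicalSpace X) (d : X → X → ℝ≥0∞) : Set (X → ℝ) :=
  {f | @Continuous X ℝ τ _ f ∧ (∃ C : ℝ, ∀ x, |f x| ≤ C) ∧
    ∀ x y, ENNReal.ofReal |f x - f y| ≤ d x y}

/-- `(X,τ,d)` is an extended metric-topological space. -/
def IsEMT {X : Type*} (τ : TopologicalSpace X) (d : X → X → ℝ≥0∞) : Prop :=
  IsExtDist d ∧
  τ = (⨅ f ∈ Lip1 τ d, TopologicalSpace.induced f inferInstance) ∧
  (∀ x y, d x y = ⨆ f ∈ Lip1 τ d, ENNReal.ofReal |f x - f y|)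

/-- A continuous-short map between (pre-)extended (pseudo)metric-topological spaces. -/
def ContinuousShort {X Y : Type*} (τX : TopologicalSpace X) (dX : X → X → ℝ≥0∞)
    (τY : TopologicalSpace Y) (dY : Y → Y → ℝ≥0∞) (φ : X → Y) : Prop :=
  @Continuous X Y τX τY φ ∧ ∀ x y, dY (φ x) (φ y) ≤ dX x y

namespace EMTAux

noncomputable section

/-- The standard extended distance on `ℝ`. -/
def dReal : ℝ → ℝ → ℝ≥0∞ := fun a b => ENNReal.ofReal |a - b|

lemma mkLip_mem (a ε : ℝ) (hε : 0 ≤ ε) :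
    (fun t : ℝ => min |t - a| ε) ∈ Lip1 inferInstance dReal := by
  refine ⟨(continuous_id.sub continuous_const).abs.min continuous_const,
    ⟨ε, fun t => ?_⟩, fun x y => ?_⟩
  · rw [abs_of_nonneg (le_min (abs_nonneg _) hε)]; exact min_le_right _ _
  · refine ENNReal.ofReal_le_ofReal ?_
    refine (abs_min_sub_min_le_max _ _ _ _).trans (max_le ?_ (by simp [abs_nonneg]))
    refine (abs_abs_sub_abs_le_abs_sub _ _).trans (le_of_eq ?_)
    rw [sub_sub_sub_cancel_right]

lemma real_isEMT : IsEMT (inferInstance : TopologicalSpace ℝ) dReal := by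
  refine ⟨⟨fun a b => ?_, fun a b => by simp [dReal, abs_sub_comm], fun a b c => ?_⟩, ?_, fun a b => ?_⟩
  · simp [dReal, ENNReal.ofReal_eq_zero, abs_nonpos_iff, sub_eq_zero]
  · rw [dReal, dReal, dReal, ← ENNReal.ofReal_add (abs_nonneg _) (abs_nonneg _)]
    exact ENNReal.ofReal_le_ofReal (abs_sub_le a c b)
  · refine le_antisymm (le_iInf fun f => le_iInf fun hf => continuous_iff_le_induced.mp hf.1) ?_
    rw [TopologicalSpace.le_def]
    intro U hU
    have key : ∀ x ∈ U, ∃ ε > 0, Metric.ball x ε ⊆ U := fun x hx => Metric.isOpen_iff.mp hU x hx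
    choose! ε hεpos hεsub using key
    have hUeq : U = ⋃ x ∈ U, (fun t => min |t - x| (ε x)) ⁻¹' Set.Iio (ε x) := by
      ext t
      simp only [Set.mem_iUnion, Set.mem_preimage, Set.mem_Iio]
      constructor
      · intro ht
        exact ⟨t, ht, by simpa using hεpos t ht⟩
      · rintro ⟨x, hx, hlt⟩
        have : |t - x| < ε x := by
          rcases lt_or_ge (|t - x|) (ε x) with h | h
          · exact h
          · exact absurd hlt (by simp [min_eq_right h])
        exact hεsub x hx (by rwa [Metric.mem_ball, Real.dist_eq])
    rw [hUeq]
    have hop : ∀ x ∈ U, @IsOpen ℝ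
        (⨅ f ∈ Lip1 (inferInstance : TopologicalSpace ℝ) dReal,
          TopologicalSpace.induced f inferInstance)
        ((fun t => min |t - x| (ε x)) ⁻¹' Set.Iio (ε x)) := by
      intro x hx
      exact TopologicalSpace.le_def.mp
        (iInf₂_le (fun t => min |t - x| (ε x)) (mkLip_mem x (ε x) (hεpos x hx).le)) _
        (isOpen_induced isOpen_Iio)
    exact @isOpen_iUnion ℝ _
        (⨅ f ∈ Lip1 (inferInstance : TopologicalSpace ℝ) dReal,
          TopologicalSpace.induced f inferInstance) _
        fun x => @isOpen_iUnion ℝ _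
          (⨅ f ∈ Lip1 (inferInstance : TopologicalSpace ℝ) dReal,
            TopologicalSpace.induced f inferInstance) _
          fun hx => hop x hx
  · refine le_antisymm ?_ (iSup₂_le fun f hf => hf.2.2 a b)
    refine le_iSup₂_of_le (fun t => min |t - a| |a - b|) (mkLip_mem a _ (abs_nonneg _)) (le_of_eq ?_)
    have h1 : min |a - a| |a - b| = 0 := by simp
    have h2 : min |b - a| |a - b| = |a - b| := by rw [abs_sub_comm b a]; exact min_self _
    simp only [dReal]
    rw [h1, h2, zero_sub, abs_neg, abs_abs]

/-- Extended distance on `ULift ℝ`. -/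
def dU : ULift.{w} ℝ → ULift.{w} ℝ → ℝ≥0∞ := fun a b => dReal a.down b.down

/-- Topology on `ULift ℝ`. -/
def τU : TopologicalSpace (ULift.{w} ℝ) := TopologicalSpace.induced ULift.down inferInstance

lemma lip1U_iff {g : ULift.{w} ℝ → ℝ} :
    g ∈ Lip1 τU dU ↔ (g ∘ ULift.up) ∈ Lip1 inferInstance dReal := by
  constructor
  · rintro ⟨hc, ⟨C, hb⟩, hl⟩
    exact ⟨hc.comp (continuous_induced_rng.mpr continuous_id),
      ⟨C, fun t => hb (ULift.up t)⟩, fun x y => hl _ _⟩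
  · rintro ⟨hc, ⟨C, hb⟩, hl⟩
    have hg : g = (g ∘ ULift.up) ∘ ULift.down := rfl
    refine ⟨?_, ⟨C, fun z => hb z.down⟩, fun x y => hl x.down y.down⟩
    rw [hg]
    exact hc.comp continuous_induced_dom

lemma ulift_isEMT : IsEMT (τU.{w}) dU := by
  refine ⟨⟨fun a b => ?_, fun a b => real_isEMT.1.symm a.down b.down,
    fun a b c => real_isEMT.1.triangle a.down b.down c.down⟩, ?_, fun a b => ?_⟩
  · rw [dU]
    exact (real_isEMT.1.eq_zero_iff a.down b.down).trans
      ⟨fun h => ULift.down_injective h, fun h => h ▸ rfl⟩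
  · refine le_antisymm (le_iInf fun g => le_iInf fun hg => continuous_iff_le_induced.mp hg.1) ?_
    have hcalc : τU.{w} = ⨅ f ∈ Lip1 (inferInstance : TopologicalSpace ℝ) dReal,
        TopologicalSpace.induced (f ∘ ULift.down) inferInstance := by
      conv_lhs => rw [τU, real_isEMT.2.1]
      simp only [induced_iInf, induced_compose]
    refine le_trans ?_ (le_of_eq hcalc.symm)
    refine le_iInf fun f => le_iInf fun hf => ?_
    exact iInf₂_le (f ∘ ULift.down) (lip1U_iff.mpr hf)
  · refine le_antisymm ?_ (iSup₂_le fun g hg => hg.2.2 a b)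
    have : dU a b = ⨆ f ∈ Lip1 (inferInstance : TopologicalSpace ℝ) dReal,
        ENNReal.ofReal |f a.down - f b.down| := real_isEMT.2.2 a.down b.down
    rw [this]
    refine iSup₂_le fun f hf => ?_
    exact le_iSup₂_of_le (f ∘ ULift.down) (lip1U_iff.mpr hf) le_rfl

/-- Helper: a real-valued `sup'` is Lipschitz-compatible. -/
lemma abs_sup'_sub_sup'_le {ι : Type*} (s : Finset ι) (hs : s.Nonempty) (f g : ι → ℝ) (K : ℝ)
    (h : ∀ i ∈ s, |f i - g i| ≤ K) : |s.sup' hs f - s.sup' hs g| ≤ K := by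
  rw [abs_sub_le_iff]
  constructor
  · rw [sub_le_iff_le_add]
    refine Finset.sup'_le _ _ fun i hi => ?_
    have h1 : f i - g i ≤ K := (abs_le.mp (h i hi)).2
    have h2 := Finset.le_sup' g hi
    linarith
  · rw [sub_le_iff_le_add]
    refine Finset.sup'_le _ _ fun i hi => ?_
    have h1 : -K ≤ f i - g i := (abs_le.mp (h i hi)).1
    have h2 := Finset.le_sup' f hi
    linarith

lemma epi_forces_zero {X : Type u} {Y : Type v}
    (τY : TopologicalSpace Y) (dY : Y → Y → ℝ≥0∞) (φ : X → Y)
    (hepi : ∀ (Z : Type w) (τZ : TopologicalSpace Z) (dZ : Z → Z → ℝ≥0∞), IsEMT τZ dZ →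
      ∀ ψ₁ ψ₂ : Y → Z, ContinuousShort τY dY τZ dZ ψ₁ → ContinuousShort τY dY τZ dZ ψ₂ →
        ψ₁ ∘ φ = ψ₂ ∘ φ → ψ₁ = ψ₂)
    (h : Y → ℝ) (hc : @Continuous Y ℝ τY _ h)
    (hshort : ∀ x y, ENNReal.ofReal |h x - h y| ≤ dY x y)
    (hzero : ∀ x, h (φ x) = 0) : ∀ y, h y = 0 := by
  intro y
  have h1 : ContinuousShort τY dY τU.{w} dU (fun _ => ULift.up 0) := by
    constructor
    · exact @continuous_const Y (ULift.{w} ℝ) τY τU.{w} _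
    · intro x y; simp [dU, dReal]
  have h2 : ContinuousShort τY dY τU.{w} dU (fun y => ULift.up (h y)) := by
    constructor
    · rw [τU]
      exact continuous_induced_rng.mpr hc
    · intro x y; exact hshort x y
  have heq := hepi (ULift.{w} ℝ) τU.{w} dU ulift_isEMT _ _ h1 h2
    (funext fun x => by simp [hzero x])
  have := congrFun heq y
  simpa using (congrArg ULift.down this).symm

end
end EMTAux

/-- A continuous-short map `φ` between e.m.t. spaces is an epimorphism (in the category of
e.m.t. spaces with continuous-short morphisms) if and only if its image is dense in the
target. -/
theorem emt_epi_iff_denseRange {X : Type u} {Y : Type v}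
    (τX : TopologicalSpace X) (dX : X → X → ℝ≥0∞)
    (τY : TopologicalSpace Y) (dY : Y → Y → ℝ≥0∞)
    (hX : IsEMT τX dX) (hY : IsEMT τY dY)
    (φ : X → Y) (hφ : ContinuousShort τX dX τY dY φ) :
    (∀ (Z : Type w) (τZ : TopologicalSpace Z) (dZ : Z → Z → ℝ≥0∞), IsEMT τZ dZ →
      ∀ ψ₁ ψ₂ : Y → Z, ContinuousShort τY dY τZ dZ ψ₁ → ContinuousShort τY dY τZ dZ ψ₂ →
        ψ₁ ∘ φ = ψ₂ ∘ φ → ψ₁ = ψ₂) ↔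
    @Dense Y τY (Set.range φ) := by
  classical
  letI := τY
  constructor
  · intro hepi
    by_contra hdense
    obtain ⟨y₀, hy₀⟩ : ∃ y₀, y₀ ∉ closure (Set.range φ) := by
      by_contra hco
      push_neg at hco
      exact hdense fun y => hco y
    suffices hh : ∃ h : Y → ℝ, @Continuous Y ℝ τY _ h ∧
        (∀ x y, ENNReal.ofReal |h x - h y| ≤ dY x y) ∧ (∀ x, h (φ x) = 0) ∧ h y₀ ≠ 0 by
      obtain ⟨h, hc, hs, hz, hne0⟩ := hh
      exact hne0 (EMTAux.epi_forces_zero τY dY φ hepi h hc hs hz y₀)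
    rcases (Set.range φ).eq_empty_or_nonempty with hre | hre
    · refine ⟨fun _ => 1, continuous_const, fun x y => by simp, fun x => ?_, one_ne_zero⟩
      exact absurd (Set.mem_range_self x) (hre ▸ Set.notMem_empty _)
    set C := closure (Set.range φ) with hCdef
    have hmem : Cᶜ ∈ @nhds Y τY y₀ := (isClosed_closure.isOpen_compl).mem_nhds hy₀
    rw [hY.2.1, iInf_subtype', nhds_iInf, Filter.mem_iInf] at hmem
    obtain ⟨I, hIfin, V, hV, hVeq⟩ := hmem
    haveI : Fintype I := hIfin.fintype
    rcases isEmpty_or_nonempty I with hIe | hIne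
    · have h1 : Cᶜ = Set.univ := by rw [hVeq]; exact Set.iInter_of_empty V
      have hclo : C = ∅ := by rw [← compl_compl C, h1, Set.compl_univ]
      obtain ⟨y, hy⟩ := hre
      exact absurd (subset_closure hy) (by rw [← hCdef, hclo]; exact Set.notMem_empty y)
    have hne : (Finset.univ : Finset I).Nonempty := Finset.univ_nonempty
    have key : ∀ i : I, ∃ ε > (0:ℝ), ∀ y : Y, |i.1.1 y - i.1.1 y₀| < ε → y ∈ V i := by
      intro i
      have hv := hV i
      rw [nhds_induced, Filter.mem_comap] at hv
      obtain ⟨t, ht, hsub⟩ := hv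
      rw [Metric.mem_nhds_iff] at ht
      obtain ⟨ε, hεpos, hball⟩ := ht
      exact ⟨ε, hεpos, fun y hy =>
        hsub (hball (by rwa [Metric.mem_ball, Real.dist_eq]))⟩
    choose ε hεpos hεmem using key
    set ε₀ := Finset.univ.inf' hne ε with hε₀def
    have hε₀pos : 0 < ε₀ := (Finset.lt_inf'_iff hne).mpr fun i _ => hεpos i
    have hε₀le : ∀ i : I, ε₀ ≤ ε i := fun i => Finset.inf'_le ε (Finset.mem_univ i)
    set q : Y → ℝ := fun y =>
      Finset.univ.sup' hne (fun i : I => (ε₀ / ε i) * |i.1.1 y - i.1.1 y₀|) with hq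
    have hqcont : @Continuous Y ℝ τY _ q := by
      rw [hq]
      refine Continuous.finset_sup'_apply hne fun i _ => ?_
      exact continuous_const.mul ((i.1.2.1.sub continuous_const).abs)
    have hqy₀ : q y₀ = 0 := by
      rw [hq]
      simp
    have hqφ : ∀ x : X, ε₀ ≤ q (φ x) := by
      intro x
      by_contra hlt
      push_neg at hlt
      rw [hq] at hlt
      have hall := (Finset.sup'_lt_iff hne).mp hlt
      have hmemV : ∀ i : I, φ x ∈ V i := by
        intro i
        have h1 := hall i (Finset.mem_univ i)
        have hd : 0 < ε₀ / ε i := div_pos hε₀pos (hεpos i)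
        have h2 : (ε₀ / ε i) * |i.1.1 (φ x) - i.1.1 y₀| < (ε₀ / ε i) * ε i := by
          rwa [div_mul_cancel₀ _ (hεpos i).ne']
        have h3 : |i.1.1 (φ x) - i.1.1 y₀| < ε i := lt_of_mul_lt_mul_left h2 hd.le
        exact hεmem i _ h3
      have hx1 : φ x ∈ Cᶜ := by
        rw [hVeq]
        exact Set.mem_iInter.mpr hmemV
      exact hx1 (subset_closure (Set.mem_range_self x))
    refine ⟨fun y => max (ε₀ - q y) 0, ?_, ?_, ?_, ?_⟩
    · exact (continuous_const.sub hqcont).max continuous_const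
    · intro x y
      have hstep1 : |max (ε₀ - q x) 0 - max (ε₀ - q y) 0| ≤ |q x - q y| := by
        refine (abs_max_sub_max_le_abs _ _ _).trans (le_of_eq ?_)
        rw [sub_sub_sub_cancel_left, abs_sub_comm]
      obtain ⟨i₀, hmem₀, hsup₀⟩ :=
        Finset.exists_mem_eq_sup' hne (fun i : I => |i.1.1 x - i.1.1 y|)
      have hstep2 : |q x - q y| ≤
          Finset.univ.sup' hne (fun i : I => |i.1.1 x - i.1.1 y|) := by
        rw [hq]
        refine EMTAux.abs_sup'_sub_sup'_le _ hne _ _ _ fun i _ => ?_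
        rw [← mul_sub, abs_mul, abs_of_nonneg (div_nonneg hε₀pos.le (hεpos i).le)]
        have hb1 : |(|i.1.1 x - i.1.1 y₀| - |i.1.1 y - i.1.1 y₀|)| ≤ |i.1.1 x - i.1.1 y| := by
          refine (abs_abs_sub_abs_le_abs_sub _ _).trans (le_of_eq ?_)
          rw [sub_sub_sub_cancel_right]
        have hb2 : ε₀ / ε i ≤ 1 := (div_le_one (hεpos i)).mpr (hε₀le i)
        calc (ε₀ / ε i) * |(|i.1.1 x - i.1.1 y₀| - |i.1.1 y - i.1.1 y₀|)|
            ≤ 1 * |i.1.1 x - i.1.1 y| := mul_le_mul hb2 hb1 (abs_nonneg _) zero_le_one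
          _ = |i.1.1 x - i.1.1 y| := one_mul _
          _ ≤ _ := Finset.le_sup' (fun i : I => |i.1.1 x - i.1.1 y|) (Finset.mem_univ i)
      refine le_trans (ENNReal.ofReal_le_ofReal (hstep1.trans hstep2)) ?_
      rw [hsup₀]
      exact i₀.1.2.2.2 x y
    · intro x
      exact max_eq_right (sub_nonpos.mpr (hqφ x))
    · show max (ε₀ - q y₀) 0 ≠ 0
      rw [hqy₀, sub_zero, max_eq_left hε₀pos.le]
      exact hε₀pos.ne'
  · intro hdense Z τZ dZ hZ ψ₁ ψ₂ h₁ h₂ hcomp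
    letI := τZ
    haveI : T2Space Z := by
      constructor
      intro z₁ z₂ hzne
      have hd : dZ z₁ z₂ ≠ 0 := fun h0 => hzne ((hZ.1.eq_zero_iff _ _).mp h0)
      have hex : ∃ f ∈ Lip1 τZ dZ, ENNReal.ofReal |f z₁ - f z₂| ≠ 0 := by
        by_contra hcon
        push_neg at hcon
        refine hd ?_
        rw [hZ.2.2]
        exact le_antisymm (iSup₂_le fun f hf => le_of_eq (hcon f hf)) zero_le
      obtain ⟨f, hf, hne⟩ := hex
      have hfne : f z₁ ≠ f z₂ := fun h => hne (by simp [h])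
      exact separated_by_continuous hf.1 hfne
    refine Continuous.ext_on hdense h₁.1 h₂.1 ?_
    rintro y ⟨x, rfl⟩
    exact congrFun hcomp x
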